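/- Let f : ℂ → ℂᴺ be holomorphic and nowhere vanishing, and let P(ξ) = (f(ξ)·f(ξ)†)/(f(ξ)†·f(ξ)), viewed as a smooth map ℝ² → Matrix (Fin N) (Fin N) ℂ via ξ₊ = x + iy. Then P satisfies the Euler–Lagrange equation of the CP^{N−1} sigma model: [∂₊∂₋P, P] = 0 at every point. -/

import Mathlib

open Matrix

noncomputable section

attribute [local instance] Matrix.normedAddCommGroup Matrix.normedSpace

/-- The Wirtinger derivative `∂₊ = ½(∂/∂x − i ∂/∂y)` of a matrix-valued map on `ℝ²`. -/
def dp {N : ℕ} (P : ℝ × ℝ → Matrix (Fin N) (Fin N) ℂ) (p : ℝ × ℝ) :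
    Matrix (Fin N) (Fin N) ℂ :=
  (2 : ℂ)⁻¹ • (fderiv ℝ P p (1, 0) - Complex.I • fderiv ℝ P p (0, 1))

/-- The Wirtinger derivative `∂₋ = ½(∂/∂x + i ∂/∂y)` of a matrix-valued map on `ℝ²`. -/
def dm {N : ℕ} (P : ℝ × ℝ → Matrix (Fin N) (Fin N) ℂ) (p : ℝ × ℝ) :
    Matrix (Fin N) (Fin N) ℂ :=
  (2 : ℂ)⁻¹ • (fderiv ℝ P p (1, 0) + Complex.I • fderiv ℝ P p (0, 1))


/-- The rank-one Hermitian projector `P = (f·f†)/(f†·f)` associated to a vector-valued map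
`f : ℂ → ℂᴺ`, viewed as a map on `ℝ²` via `ξ₊ = x + iy`. -/
def projOf {N : ℕ} (f : ℂ → (Fin N → ℂ)) (p : ℝ × ℝ) : Matrix (Fin N) (Fin N) ℂ :=
  (star (f ((p.1 : ℂ) + (p.2 : ℂ) * Complex.I)) ⬝ᵥ f ((p.1 : ℂ) + (p.2 : ℂ) * Complex.I))⁻¹ •
    vecMulVec (f ((p.1 : ℂ) + (p.2 : ℂ) * Complex.I))
      (star (f ((p.1 : ℂ) + (p.2 : ℂ) * Complex.I)))

/-! ### Auxiliary development -/

namespace ELaux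

set_option linter.unusedSectionVars false

/-- Generic Wirtinger derivative `∂₊`. -/
def wp {E : Type*} [NormedAddCommGroup E] [NormedSpace ℝ E] [SMul ℂ E]
    (g : ℝ × ℝ → E) (p : ℝ × ℝ) : E :=
  (2 : ℂ)⁻¹ • (fderiv ℝ g p (1, 0) - Complex.I • fderiv ℝ g p (0, 1))

/-- Generic Wirtinger derivative `∂₋`. -/
def wm {E : Type*} [NormedAddCommGroup E] [NormedSpace ℝ E] [SMul ℂ E]
    (g : ℝ × ℝ → E) (p : ℝ × ℝ) : E :=
  (2 : ℂ)⁻¹ • (fderiv ℝ g p (1, 0) + Complex.I • fderiv ℝ g p (0, 1))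

section bilin
variable {E F G : Type*}
  [NormedAddCommGroup E] [NormedSpace ℂ E] [FiniteDimensional ℂ E]
  [NormedAddCommGroup F] [NormedSpace ℂ F] [FiniteDimensional ℂ F]
  [NormedAddCommGroup G] [NormedSpace ℂ G]

/-- Promote a bilinear map between finite-dimensional complex spaces to a CLM. -/
def bilinCLM (g : E →ₗ[ℂ] F →ₗ[ℂ] G) : E →L[ℂ] F →L[ℂ] G :=
  LinearMap.toContinuousLinearMap
    { toFun := fun x => LinearMap.toContinuousLinearMap (g x)
      map_add' := by intro x y; ext z; simp
      map_smul' := by intro c x; ext z; simp }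

@[simp] lemma bilinCLM_apply (g : E →ₗ[ℂ] F →ₗ[ℂ] G) (x : E) (y : F) :
    bilinCLM g x y = g x y := rfl

variable {M : ℝ × ℝ → E} {N' : ℝ × ℝ → F} {p : ℝ × ℝ}

lemma fderiv_bilin_apply (b : E →L[ℂ] F →L[ℂ] G)
    (hM : DifferentiableAt ℝ M p) (hN : DifferentiableAt ℝ N' p) (v : ℝ × ℝ) :
    fderiv ℝ (fun q => b (M q) (N' q)) p v
      = b (fderiv ℝ M p v) (N' p) + b (M p) (fderiv ℝ N' p v) := by
  have hc : HasFDerivAt (fun q => ((b (M q)).restrictScalars ℝ : F →L[ℝ] G))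
      (((ContinuousLinearMap.restrictScalarsL ℂ F G ℝ ℝ).comp
        (b.restrictScalars ℝ)).comp (fderiv ℝ M p)) p := by
    exact (((ContinuousLinearMap.restrictScalarsL ℂ F G ℝ ℝ).comp
      (b.restrictScalars ℝ)).hasFDerivAt).comp p hM.hasFDerivAt
  have h := hc.clm_apply hN.hasFDerivAt
  have h2 : HasFDerivAt (fun q => b (M q) (N' q)) _ p := h
  rw [h2.fderiv]
  simp
  abel

lemma diff_bilin (b : E →L[ℂ] F →L[ℂ] G)
    (hM : DifferentiableAt ℝ M p) (hN : DifferentiableAt ℝ N' p) :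
    DifferentiableAt ℝ (fun q => b (M q) (N' q)) p := by
  have hc : HasFDerivAt (fun q => ((b (M q)).restrictScalars ℝ : F →L[ℝ] G))
      (((ContinuousLinearMap.restrictScalarsL ℂ F G ℝ ℝ).comp
        (b.restrictScalars ℝ)).comp (fderiv ℝ M p)) p := by
    exact (((ContinuousLinearMap.restrictScalarsL ℂ F G ℝ ℝ).comp
      (b.restrictScalars ℝ)).hasFDerivAt).comp p hM.hasFDerivAt
  exact (hc.clm_apply hN.hasFDerivAt).differentiableAt

lemma wm_bilin (b : E →L[ℂ] F →L[ℂ] G)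
    (hM : DifferentiableAt ℝ M p) (hN : DifferentiableAt ℝ N' p) :
    wm (fun q => b (M q) (N' q)) p = b (wm M p) (N' p) + b (M p) (wm N' p) := by
  simp only [wm, fderiv_bilin_apply b hM hN, _root_.map_smul, map_add,
    ContinuousLinearMap.add_apply, ContinuousLinearMap.smul_apply,
    ContinuousLinearMap.map_smul]
  module

lemma wp_bilin (b : E →L[ℂ] F →L[ℂ] G)
    (hM : DifferentiableAt ℝ M p) (hN : DifferentiableAt ℝ N' p) :
    wp (fun q => b (M q) (N' q)) p = b (wp M p) (N' p) + b (M p) (wp N' p) := by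
  simp only [wp, fderiv_bilin_apply b hM hN, _root_.map_smul, map_add, map_sub,
    ContinuousLinearMap.add_apply, ContinuousLinearMap.sub_apply,
    ContinuousLinearMap.smul_apply, ContinuousLinearMap.map_smul]
  module

end bilin

abbrev Mat (N : ℕ) := Matrix (Fin N) (Fin N) ℂ
abbrev Vec (N : ℕ) := Fin N → ℂ

variable {N : ℕ}

def mulLin : Mat N →ₗ[ℂ] Mat N →ₗ[ℂ] Mat N := LinearMap.mul ℂ (Mat N)

def mulVecLin' : Mat N →ₗ[ℂ] Vec N →ₗ[ℂ] Vec N where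
  toFun M := M.mulVecLin
  map_add' := by intro A B; ext v i; simp [Matrix.add_mulVec]
  map_smul' := by intro c A; ext v i; simp [Matrix.smul_mulVec]

def outerLin : Vec N →ₗ[ℂ] Vec N →ₗ[ℂ] Mat N where
  toFun u :=
    { toFun := fun v => vecMulVec u v
      map_add' := by intro v w; ext i j; simp [vecMulVec_apply]; ring
      map_smul' := by intro c v; ext i j; simp [vecMulVec_apply]; ring }
  map_add' := by intro u w; ext v i j; simp [vecMulVec_apply]; ring
  map_smul' := by intro c u; ext v i j; simp [vecMulVec_apply]

def smulLin : ℂ →ₗ[ℂ] Mat N →ₗ[ℂ] Mat N := LinearMap.lsmul ℂ (Mat N)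

@[simp] lemma mulLin_apply (A B : Mat N) : mulLin A B = A * B := rfl
@[simp] lemma mulVecLin'_apply (A : Mat N) (v : Vec N) : mulVecLin' A v = A *ᵥ v := rfl
@[simp] lemma outerLin_apply (u v : Vec N) : outerLin u v = vecMulVec u v := rfl
@[simp] lemma smulLin_apply (c : ℂ) (A : Mat N) : smulLin c A = c • A := rfl

def dotLin : Vec N →ₗ[ℂ] Vec N →ₗ[ℂ] ℂ where
  toFun u :=
    { toFun := fun v => u ⬝ᵥ v
      map_add' := by intro v w; simp [dotProduct_add]
      map_smul' := by intro c v; simp [dotProduct_smul] }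
  map_add' := by intro u w; ext v; simp [add_dotProduct]
  map_smul' := by intro c u; ext v; simp [smul_dotProduct]

/-- Entrywise star on vectors, as a continuous `ℝ`-linear map. -/
def starVL : Vec N →L[ℝ] Vec N :=
  LinearMap.toContinuousLinearMap
    { toFun := fun v => star v
      map_add' := by intro a b; exact star_add _ _
      map_smul' := by intro r v; simp [star_smul] }

@[simp] lemma starVL_apply (v : Vec N) : starVL v = star v := rfl

/-- Conjugate transpose, as a continuous `ℝ`-linear map. -/
def ctL : Mat N →L[ℝ] Mat N :=
  LinearMap.toContinuousLinearMap
    { toFun := fun M => M.conjTranspose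
      map_add' := by intro a b; exact conjTranspose_add _ _
      map_smul' := by intro r M; simp [conjTranspose_smul] }

@[simp] lemma ctL_apply (M : Mat N) : ctL M = Mᴴ := rfl

lemma vecMulVec_mulVec (u v w : Vec N) : vecMulVec u v *ᵥ w = (v ⬝ᵥ w) • u := by
  ext i; simp only [mulVec, dotProduct, vecMulVec_apply, Pi.smul_apply, smul_eq_mul,
    Finset.mul_sum, Finset.sum_mul]
  exact Finset.sum_congr rfl fun j _ => by ring

lemma mul_vecMulVec (M : Mat N) (u v : Vec N) :
    M * vecMulVec u v = vecMulVec (M *ᵥ u) v := by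
  ext i j; simp [Matrix.mul_apply, vecMulVec_apply, mulVec, dotProduct, Finset.sum_mul]
  exact Finset.sum_congr rfl fun k _ => by ring

lemma smul_vecMulVec (c : ℂ) (u v : Vec N) :
    vecMulVec (c • u) v = c • vecMulVec u v := by
  ext i j; simp [vecMulVec_apply]; ring

lemma vecMulVec_zero_left (v : Vec N) : vecMulVec (0 : Vec N) v = 0 := by
  ext i j; simp [vecMulVec_apply]

open scoped ComplexOrder in
lemma star_dot_ne_zero (v : Vec N) (hv : v ≠ 0) : star v ⬝ᵥ v ≠ 0 :=
  fun h => hv (dotProduct_star_self_eq_zero.mp h)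

lemma conj_star_dot (v : Vec N) : starRingEnd ℂ (star v ⬝ᵥ v) = star v ⬝ᵥ v := by
  simp [dotProduct, map_sum, mul_comm]

lemma conjTranspose_vecMulVec (u v : Vec N) :
    (vecMulVec u v)ᴴ = vecMulVec (star v) (star u) := by
  ext i j; simp [conjTranspose_apply, vecMulVec_apply, mul_comm]

lemma wp_zero_fun (p : ℝ × ℝ) : wp (fun _ : ℝ × ℝ => (0 : Mat N)) p = 0 := by
  simp [wp, fderiv_const]

/-! ### The setting -/

variable (f : ℂ → Vec N)

/-- The chart `ℝ² → ℂ` as a CLM. -/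
def phiL : ℝ × ℝ →L[ℝ] ℂ :=
  Complex.ofRealCLM.comp (ContinuousLinearMap.fst ℝ ℝ ℝ) +
    (ContinuousLinearMap.snd ℝ ℝ ℝ).smulRight Complex.I

lemma phiL_apply (p : ℝ × ℝ) : phiL p = (p.1 : ℂ) + (p.2 : ℂ) * Complex.I := by
  simp [phiL, Complex.real_smul]

def Fv : ℝ × ℝ → Vec N := fun p => f ((p.1 : ℂ) + (p.2 : ℂ) * Complex.I)

def sf : ℝ × ℝ → ℂ := fun p => star (Fv f p) ⬝ᵥ Fv f p

lemma projOf_eq : projOf f = fun p => (sf f p)⁻¹ • vecMulVec (Fv f p) (star (Fv f p)) := rfl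

variable {f}

section main
variable (hf : Differentiable ℂ f) (hf0 : ∀ ξ, f ξ ≠ 0)
include hf

lemma hasFDerivAt_Fv (p : ℝ × ℝ) :
    HasFDerivAt (Fv f)
      (((fderiv ℂ f ((p.1 : ℂ) + (p.2 : ℂ) * Complex.I)).restrictScalars ℝ).comp phiL) p := by
  have hphi : HasFDerivAt (fun q : ℝ × ℝ => (q.1 : ℂ) + (q.2 : ℂ) * Complex.I) phiL p := by
    have := phiL.hasFDerivAt (x := p)
    rwa [show ⇑phiL = fun q : ℝ × ℝ => (q.1 : ℂ) + (q.2 : ℂ) * Complex.I from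
      funext phiL_apply] at this
  exact ((hf _).hasFDerivAt.restrictScalars ℝ).comp p hphi

lemma contDiff_Fv : ContDiff ℝ 2 (Fv f) := by
  have h1 : ContDiff ℝ 2 (fun q : ℝ × ℝ => (q.1 : ℂ) + (q.2 : ℂ) * Complex.I) := by
    rw [show (fun q : ℝ × ℝ => (q.1 : ℂ) + (q.2 : ℂ) * Complex.I) = ⇑phiL from
      (funext phiL_apply).symm]
    exact phiL.contDiff
  exact ((hf.contDiff : ContDiff ℂ 2 f).restrict_scalars ℝ).comp h1

lemma wm_Fv_eq_zero (p : ℝ × ℝ) : wm (Fv f) p = 0 := by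
  have h := (hasFDerivAt_Fv hf p).fderiv
  set L := fderiv ℂ f ((p.1 : ℂ) + (p.2 : ℂ) * Complex.I)
  have h1 : fderiv ℝ (Fv f) p (1, 0) = L 1 := by
    rw [h]; simp [phiL_apply]
  have h2 : fderiv ℝ (Fv f) p (0, 1) = L Complex.I := by
    rw [h]; simp [phiL_apply]
  have hLI : L Complex.I = Complex.I • L 1 := by
    simpa using L.map_smul Complex.I 1
  rw [wm, h1, h2, hLI, smul_smul, Complex.I_mul_I, neg_one_smul, add_neg_cancel, smul_zero]

lemma diffAt_Fv (p : ℝ × ℝ) : DifferentiableAt ℝ (Fv f) p :=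
  ((contDiff_Fv hf).differentiable (by norm_num)).differentiableAt

include hf0

lemma sf_ne_zero (p : ℝ × ℝ) : sf f p ≠ 0 :=
  star_dot_ne_zero _ (hf0 _)

lemma contDiff_sf : ContDiff ℝ 2 (sf f) := by
  have hF := contDiff_Fv hf
  have hSF : ContDiff ℝ 2 (fun p => star (Fv f p)) := (starVL.contDiff).comp hF
  have hb : ContDiff ℝ 2 (fun x : Vec N × Vec N => bilinCLM dotLin x.1 x.2) :=
    ((bilinCLM (dotLin (N := N))).isBoundedBilinearMap.contDiff).restrict_scalars ℝ
  exact hb.comp (hSF.prodMk hF)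

lemma contDiff_projOf : ContDiff ℝ 2 (projOf f) := by
  have hF := contDiff_Fv hf
  have hSF : ContDiff ℝ 2 (fun p => star (Fv f p)) := (starVL.contDiff).comp hF
  have hsi : ContDiff ℝ 2 (fun p => (sf f p)⁻¹) :=
    (contDiff_sf hf hf0).inv (sf_ne_zero hf hf0)
  have houter : ContDiff ℝ 2 (fun p => vecMulVec (Fv f p) (star (Fv f p))) := by
    have hb : ContDiff ℝ 2 (fun x : Vec N × Vec N => bilinCLM outerLin x.1 x.2) :=
      ((bilinCLM (outerLin (N := N))).isBoundedBilinearMap.contDiff).restrict_scalars ℝ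
    exact hb.comp (hF.prodMk hSF)
  have hb2 : ContDiff ℝ 2 (fun x : ℂ × Mat N => bilinCLM smulLin x.1 x.2) :=
    ((bilinCLM (smulLin (N := N))).isBoundedBilinearMap.contDiff).restrict_scalars ℝ
  exact hb2.comp (hsi.prodMk houter)

lemma diffAt_projOf (p : ℝ × ℝ) : DifferentiableAt ℝ (projOf f) p :=
  ((contDiff_projOf hf hf0).differentiable (by norm_num)).differentiableAt

/-! ### Pointwise algebraic identities -/

lemma proj_mulVec (p : ℝ × ℝ) : projOf f p *ᵥ Fv f p = Fv f p := by
  rw [projOf_eq, Matrix.smul_mulVec, vecMulVec_mulVec]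
  rw [show star (Fv f p) ⬝ᵥ Fv f p = sf f p from rfl, smul_smul,
    inv_mul_cancel₀ (sf_ne_zero hf hf0 p), one_smul]

lemma proj_idem (p : ℝ × ℝ) : projOf f p * projOf f p = projOf f p := by
  rw [projOf_eq]
  simp only [Matrix.smul_mul, Matrix.mul_smul, mul_vecMulVec, vecMulVec_mulVec]
  rw [show star (Fv f p) ⬝ᵥ Fv f p = sf f p from rfl, smul_vecMulVec, smul_smul, smul_smul]
  congr 1
  rw [mul_assoc, inv_mul_cancel₀ (sf_ne_zero hf hf0 p), mul_one]

lemma proj_herm (p : ℝ × ℝ) : (projOf f p)ᴴ = projOf f p := by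
  rw [projOf_eq]
  simp only [conjTranspose_smul, conjTranspose_vecMulVec, star_star]
  congr 1
  rw [show (star ((sf f p)⁻¹) : ℂ) = (starRingEnd ℂ (sf f p))⁻¹ by simp [Complex.star_def],
    show (starRingEnd ℂ) (sf f p) = sf f p from conj_star_dot (Fv f p)]

/-! ### First-derivative identities -/

lemma wm_proj_mulVec_Fv (p : ℝ × ℝ) : wm (projOf f) p *ᵥ Fv f p = 0 := by
  have h := wm_bilin (bilinCLM mulVecLin') (diffAt_projOf hf hf0 p) (diffAt_Fv hf p)
  have he : (fun q => bilinCLM mulVecLin' (projOf f q) (Fv f q)) = Fv f := by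
    funext q
    simpa [mulVecLin'] using proj_mulVec hf hf0 q
  rw [he, wm_Fv_eq_zero hf] at h
  have h2 : (0 : Vec N) = wm (projOf f) p *ᵥ Fv f p + projOf f p *ᵥ (0 : Vec N) := by
    simpa [mulVecLin', wm_Fv_eq_zero hf] using h
  rw [Matrix.mulVec_zero, add_zero] at h2
  exact h2.symm

lemma wm_proj_mul_proj (p : ℝ × ℝ) : wm (projOf f) p * projOf f p = 0 := by
  have h := wm_proj_mulVec_Fv hf hf0 p
  have hrp : projOf f p = (sf f p)⁻¹ • vecMulVec (Fv f p) (star (Fv f p)) := rfl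
  rw [hrp, Matrix.mul_smul, mul_vecMulVec, h, vecMulVec_zero_left, smul_zero]

lemma proj_mul_wm_proj (p : ℝ × ℝ) : projOf f p * wm (projOf f) p = wm (projOf f) p := by
  have h := wm_bilin (bilinCLM mulLin) (diffAt_projOf hf hf0 p) (diffAt_projOf hf hf0 p)
  have he : (fun q => bilinCLM mulLin (projOf f q) (projOf f q)) = projOf f := by
    funext q
    simpa [mulLin] using proj_idem hf hf0 q
  rw [he] at h
  have h2 : wm (projOf f) p
      = wm (projOf f) p * projOf f p + projOf f p * wm (projOf f) p := by
    simpa [mulLin] using h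
  rw [wm_proj_mul_proj hf hf0, zero_add] at h2
  exact h2.symm

/-- The conjugate transpose intertwines with `fderiv` of the (Hermitian) projector. -/
lemma fderiv_proj_herm (p : ℝ × ℝ) (v : ℝ × ℝ) :
    (fderiv ℝ (projOf f) p v)ᴴ = fderiv ℝ (projOf f) p v := by
  have h1 : HasFDerivAt (fun q => ctL (projOf f q)) (ctL.comp (fderiv ℝ (projOf f) p)) p :=
    ctL.hasFDerivAt.comp p (diffAt_projOf hf hf0 p).hasFDerivAt
  have he : (fun q => ctL (projOf f q)) = projOf f := by
    funext q; simpa using proj_herm hf hf0 q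
  rw [he] at h1
  conv_rhs => rw [h1.fderiv]
  simp

lemma wp_proj_eq_wm_ct (p : ℝ × ℝ) : wp (projOf f) p = (wm (projOf f) p)ᴴ := by
  erw [wp, wm, conjTranspose_smul, conjTranspose_add, conjTranspose_smul,
    fderiv_proj_herm hf hf0, fderiv_proj_herm hf hf0]
  simp [Complex.star_def, Complex.conj_I, sub_eq_add_neg, neg_smul]
  rfl

lemma proj_mul_wp_proj (p : ℝ × ℝ) : projOf f p * wp (projOf f) p = 0 := by
  rw [wp_proj_eq_wm_ct hf hf0]
  conv_lhs => rw [← proj_herm hf hf0 p]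
  rw [← conjTranspose_mul, wm_proj_mul_proj hf hf0, conjTranspose_zero]

lemma wp_proj_mul_proj (p : ℝ × ℝ) :
    wp (projOf f) p * projOf f p = wp (projOf f) p := by
  have h := wp_bilin (bilinCLM mulLin) (diffAt_projOf hf hf0 p) (diffAt_projOf hf hf0 p)
  have he : (fun q => bilinCLM mulLin (projOf f q) (projOf f q)) = projOf f := by
    funext q
    simpa [mulLin] using proj_idem hf hf0 q
  rw [he] at h
  have h2 : wp (projOf f) p
      = wp (projOf f) p * projOf f p + projOf f p * wp (projOf f) p := by
    simpa [mulLin] using h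
  rw [proj_mul_wp_proj hf hf0, add_zero] at h2
  exact h2.symm

/-! ### Second derivatives -/

instance instNACGclm : NormedAddCommGroup (ℝ × ℝ →L[ℝ] Mat N) :=
  ContinuousLinearMap.toNormedAddCommGroup

instance instNSclm : NormedSpace ℝ (ℝ × ℝ →L[ℝ] Mat N) :=
  ContinuousLinearMap.toNormedSpace

lemma contDiff_fderiv_apply (v : ℝ × ℝ) :
    ContDiff ℝ 1 (fun q => fderiv ℝ (projOf f) q v) := by
  have h : ContDiff ℝ 1 (fderiv ℝ (projOf f)) :=
    (contDiff_projOf hf hf0).fderiv_right (by norm_num)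
  exact (ContinuousLinearMap.apply ℝ (Mat N) v).contDiff.comp h

lemma contDiff_wm_proj : ContDiff ℝ 1 (fun q => wm (projOf f) q) := by
  have h1 := contDiff_fderiv_apply hf hf0 (1, 0)
  have h2 := contDiff_fderiv_apply hf hf0 (0, 1)
  exact ((h1.add (h2.const_smul Complex.I)).const_smul ((2 : ℂ)⁻¹))

lemma contDiff_wp_proj : ContDiff ℝ 1 (fun q => wp (projOf f) q) := by
  have h1 := contDiff_fderiv_apply hf hf0 (1, 0)
  have h2 := contDiff_fderiv_apply hf hf0 (0, 1)
  exact ((h1.sub (h2.const_smul Complex.I)).const_smul ((2 : ℂ)⁻¹))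

lemma fderiv_fderiv_apply (p v : ℝ × ℝ) :
    fderiv ℝ (fun q => fderiv ℝ (projOf f) q v) p
      = (ContinuousLinearMap.apply ℝ (Mat N) v).comp (fderiv ℝ (fderiv ℝ (projOf f)) p) := by
  have hPd : DifferentiableAt ℝ (fderiv ℝ (projOf f)) p :=
    (((contDiff_projOf hf hf0).fderiv_right
      (by norm_num : (1 : WithTop ℕ∞) + 1 ≤ 2)).differentiable one_ne_zero).differentiableAt
  exact ((ContinuousLinearMap.apply ℝ (Mat N) v).hasFDerivAt.comp p hPd.hasFDerivAt).fderiv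

/-- Equality of mixed Wirtinger derivatives (Schwarz). -/
lemma wirtinger_symm (p : ℝ × ℝ) :
    wm (fun q => wp (projOf f) q) p = wp (fun q => wm (projOf f) q) p := by
  have hsym : fderiv ℝ (fderiv ℝ (projOf f)) p (1, 0) (0, 1)
      = fderiv ℝ (fderiv ℝ (projOf f)) p (0, 1) (1, 0) :=
    (((contDiff_projOf hf hf0).contDiffAt).isSymmSndFDerivAt (by norm_num)) _ _
  have hg1 : DifferentiableAt ℝ (fun q => fderiv ℝ (projOf f) q (1, 0)) p :=
    ((contDiff_fderiv_apply hf hf0 (1, 0)).differentiable one_ne_zero).differentiableAt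
  have hg2 : DifferentiableAt ℝ (fun q => fderiv ℝ (projOf f) q (0, 1)) p :=
    ((contDiff_fderiv_apply hf hf0 (0, 1)).differentiable one_ne_zero).differentiableAt
  have e1 : ∀ w, fderiv ℝ (fun q => wp (projOf f) q) p w
      = (2 : ℂ)⁻¹ • (fderiv ℝ (fderiv ℝ (projOf f)) p w (1, 0)
        - Complex.I • fderiv ℝ (fderiv ℝ (projOf f)) p w (0, 1)) := by
    intro w
    have : (fun q => wp (projOf f) q)
        = fun q => (2 : ℂ)⁻¹ • ((fun q => fderiv ℝ (projOf f) q (1, 0)) q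
          - Complex.I • (fun q => fderiv ℝ (projOf f) q (0, 1)) q) := rfl
    have hd : HasFDerivAt (fun q => (2 : ℂ)⁻¹ • ((fun q => fderiv ℝ (projOf f) q (1, 0)) q
          - Complex.I • (fun q => fderiv ℝ (projOf f) q (0, 1)) q))
        ((2 : ℂ)⁻¹ • (fderiv ℝ (fun q => fderiv ℝ (projOf f) q (1, 0)) p
          - Complex.I • fderiv ℝ (fun q => fderiv ℝ (projOf f) q (0, 1)) p)) p :=
      (hg1.hasFDerivAt.fun_sub (hg2.hasFDerivAt.fun_const_smul _)).fun_const_smul _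
    rw [this, hd.fderiv]
    simp [fderiv_fderiv_apply hf hf0]
    rfl
  have e2 : ∀ w, fderiv ℝ (fun q => wm (projOf f) q) p w
      = (2 : ℂ)⁻¹ • (fderiv ℝ (fderiv ℝ (projOf f)) p w (1, 0)
        + Complex.I • fderiv ℝ (fderiv ℝ (projOf f)) p w (0, 1)) := by
    intro w
    have : (fun q => wm (projOf f) q)
        = fun q => (2 : ℂ)⁻¹ • ((fun q => fderiv ℝ (projOf f) q (1, 0)) q
          + Complex.I • (fun q => fderiv ℝ (projOf f) q (0, 1)) q) := rfl
    have hd : HasFDerivAt (fun q => (2 : ℂ)⁻¹ • ((fun q => fderiv ℝ (projOf f) q (1, 0)) q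
          + Complex.I • (fun q => fderiv ℝ (projOf f) q (0, 1)) q))
        ((2 : ℂ)⁻¹ • (fderiv ℝ (fun q => fderiv ℝ (projOf f) q (1, 0)) p
          + Complex.I • fderiv ℝ (fun q => fderiv ℝ (projOf f) q (0, 1)) p)) p :=
      (hg1.hasFDerivAt.fun_add (hg2.hasFDerivAt.fun_const_smul _)).fun_const_smul _
    rw [this, hd.fderiv]
    rw [fderiv_fderiv_apply hf hf0, fderiv_fderiv_apply hf hf0]
    rfl
  erw [wm, wp, e1 (1, 0), e1 (0, 1), e2 (1, 0), e2 (0, 1), hsym]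
  module

/-! ### Second-derivative identities and conclusion -/

lemma EL_aux (p : ℝ × ℝ) :
    wp (fun q => wm (projOf f) q) p * projOf f p
      - projOf f p * wp (fun q => wm (projOf f) q) p = 0 := by
  set Pf := projOf f with hPf
  set A : ℝ × ℝ → Mat N := fun q => wp Pf q with hA
  set B : ℝ × ℝ → Mat N := fun q => wm Pf q with hB
  have hBd : ∀ q, DifferentiableAt ℝ B q := fun q =>
    ((contDiff_wm_proj hf hf0).differentiable one_ne_zero).differentiableAt
  have hAd : ∀ q, DifferentiableAt ℝ A q := fun q =>
    ((contDiff_wp_proj hf hf0).differentiable one_ne_zero).differentiableAt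
  have hPd : ∀ q, DifferentiableAt ℝ Pf q := diffAt_projOf hf hf0
  -- h1 : from B·P = 0
  have h1 : (0 : Mat N) = wp B p * Pf p + B p * A p := by
    have h := wp_bilin (bilinCLM mulLin) (hBd p) (hPd p)
    have he : (fun q => bilinCLM mulLin (B q) (Pf q)) = fun _ => (0 : Mat N) := by
      funext q
      simpa [mulLin] using wm_proj_mul_proj hf hf0 q
    rw [he, wp_zero_fun] at h
    simpa [mulLin] using h
  -- h3 : from A·P = A, using Schwarz to replace wm A by wp B
  have h3 : wp B p = wp B p * Pf p + A p * B p := by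
    have h := wm_bilin (bilinCLM mulLin) (hAd p) (hPd p)
    have he : (fun q => bilinCLM mulLin (A q) (Pf q)) = A := by
      funext q
      simpa [mulLin] using wp_proj_mul_proj hf hf0 q
    rw [he] at h
    have hs := wirtinger_symm hf hf0 p
    have h2 : wp B p = wm A p * Pf p + A p * B p := by
      rw [← hs]
      simpa [mulLin] using h
    rwa [hs] at h2
  -- combine
  have hXP : wp B p * Pf p = -(B p * A p) := eq_neg_of_add_eq_zero_left h1.symm
  have hX : wp B p = -(B p * A p) + A p * B p := by rw [h3, hXP]
  -- h2 : from P·B = B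
  have h2 : wp B p = A p * B p + Pf p * wp B p := by
    have h := wp_bilin (bilinCLM mulLin) (hPd p) (hBd p)
    have he : (fun q => bilinCLM mulLin (Pf q) (B q)) = B := by
      funext q
      simpa [mulLin] using proj_mul_wm_proj hf hf0 q
    rw [he] at h
    simpa [mulLin] using h
  have hPX : Pf p * wp B p = wp B p - A p * B p := by
    rw [eq_sub_iff_add_eq, add_comm]; exact h2.symm
  rw [hXP, hPX, hX]
  abel

end main
end ELaux

/-- The projector `P` associated to a nowhere-vanishing holomorphic `f : ℂ → ℂᴺ` satisfies the
Euler–Lagrange equation of the `CP^{N−1}` sigma model: `[∂₊∂₋P, P] = 0` everywhere. -/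
theorem holomorphic_projector_satisfies_EL {N : ℕ} (f : ℂ → (Fin N → ℂ))
    (hf : Differentiable ℂ f) (hf0 : ∀ ξ, f ξ ≠ 0)
    (P : ℝ × ℝ → Matrix (Fin N) (Fin N) ℂ) (hPdef : P = projOf f) :
    ∀ p, dp (fun q => dm P q) p * P p - P p * dp (fun q => dm P q) p = 0 := by
  subst hPdef
  intro p
  have h := ELaux.EL_aux hf hf0 p
  exact h
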